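/- Let k be a field and C a k-linear category. The canonical fully faithful k-linear functor ι : C → Kar(C) into the Karoubi envelope induces an isomorphism of k-vector spaces Tr(ι) : Tr(C) → Tr(Kar(C)). -/

import Mathlib

open CategoryTheory CategoryTheory.Limits

universe v u v' u'

variable (k : Type*) [Field k]

/-- The submodule of commutator relations defining the trace of a `k`-linear category. -/
noncomputable def traceRel (C : Type u) [Category.{v} C] [Preadditive C]
    [CategoryTheory.Linear k C] : Submodule k (DirectSum C fun x : C => x ⟶ x) :=
  letI := Classical.decEq C
  Submodule.span k
    {z | ∃ (x y : C) (f : x ⟶ y) (g : y ⟶ x),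
      z = DirectSum.of (fun w : C => w ⟶ w) x (f ≫ g)
        - DirectSum.of (fun w : C => w ⟶ w) y (g ≫ f)}

/-- The trace (zeroth Hochschild–Mitchell homology) of a `k`-linear category:
`(⊕ₓ End x) / span{fg - gf}`. -/
noncomputable abbrev Trace (C : Type u) [Category.{v} C] [Preadditive C]
    [CategoryTheory.Linear k C] : Type _ :=
  (DirectSum C fun x : C => x ⟶ x) ⧸ traceRel k C

/-- The class `[f]` of an endomorphism `f : x ⟶ x` in the trace. -/
noncomputable def traceMk {C : Type u} [Category.{v} C] [Preadditive C]
    [CategoryTheory.Linear k C] {x : C} (f : x ⟶ x) : Trace k C :=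
  letI := Classical.decEq C
  Submodule.Quotient.mk (DirectSum.of (fun w : C => w ⟶ w) x f)

/-- The `k`-linear map `Tr(F) : Tr(C) → Tr(D)` induced by a `k`-linear functor `F : C ⥤ D`,
sending `[f]` to `[F.map f]`. -/
noncomputable def traceMap {C : Type u} [Category.{v} C] [Preadditive C]
    [CategoryTheory.Linear k C] {D : Type u'} [Category.{v'} D] [Preadditive D]
    [CategoryTheory.Linear k D] (F : C ⥤ D) [F.Additive] [F.Linear k] :
    Trace k C →ₗ[k] Trace k D :=
  letI := Classical.decEq C
  letI := Classical.decEq D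
  Submodule.liftQ (traceRel k C)
    (DirectSum.toModule k C (Trace k D)
      (fun x => (traceRel k D).mkQ ∘ₗ
        (DirectSum.lof k D (fun w : D => w ⟶ w) (F.obj x)) ∘ₗ (F.mapLinearMap k)))
    (by
      rw [traceRel, Submodule.span_le]
      rintro z ⟨x, y, f, g, rfl⟩
      simp only [SetLike.mem_coe, LinearMap.mem_ker, map_sub]
      rw [← DirectSum.lof_eq_of k, ← DirectSum.lof_eq_of k,
        DirectSum.toModule_lof, DirectSum.toModule_lof]
      simp only [LinearMap.comp_apply, Functor.coe_mapLinearMap]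
      rw [sub_eq_zero]
      simp only [Submodule.mkQ_apply]
      rw [Submodule.Quotient.eq, traceRel]
      refine Submodule.subset_span ⟨F.obj x, F.obj y, F.map f, F.map g, ?_⟩
      rw [DirectSum.lof_eq_of k, DirectSum.lof_eq_of k, F.map_comp, F.map_comp])

namespace CategoryTheory.Idempotents.Karoubi

variable {C : Type u} [Category.{v} C] [Preadditive C] [CategoryTheory.Linear k C]

instance instSMulHom (P Q : Karoubi C) : SMul k (P ⟶ Q) :=
  ⟨fun r f =>
    ⟨r • f.f, by
      rw [CategoryTheory.Linear.smul_comp, CategoryTheory.Linear.comp_smul, ← f.comm]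
      simp only [← Category.assoc, P.idem, Karoubi.p_comp, Karoubi.comp_p]⟩⟩

@[simp]
theorem smul_hom_f {P Q : Karoubi C} (r : k) (f : P ⟶ Q) : (r • f).f = r • f.f := rfl

instance instModuleHom (P Q : Karoubi C) : Module k (P ⟶ Q) where
  one_smul f := hom_ext _ _ (one_smul k f.f)
  mul_smul r s f := hom_ext _ _ (mul_smul r s f.f)
  smul_zero r := hom_ext _ _ (smul_zero r)
  smul_add r f g := hom_ext _ _ (smul_add r f.f g.f)
  add_smul r s f := hom_ext _ _ (add_smul r s f.f)
  zero_smul f := hom_ext _ _ (zero_smul k f.f)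

instance instLinear : CategoryTheory.Linear k (Karoubi C) where
  homModule P Q := inferInstance
  smul_comp P Q R r f g := hom_ext _ _ (CategoryTheory.Linear.smul_comp _ _ _ r f.f g.f)
  comp_smul P Q R f r g := hom_ext _ _ (CategoryTheory.Linear.comp_smul _ _ _ f.f r g.f)

instance instToKaroubiLinear : (toKaroubi C).Linear k where
  map_smul := by intros; exact hom_ext _ _ rfl

end CategoryTheory.Idempotents.Karoubi


open CategoryTheory.Idempotents

section TraceInverse

variable {C : Type u} [Category.{v} C] [Preadditive C] [CategoryTheory.Linear k C]

/-- The `k`-linear map sending a morphism in the Karoubi envelope to its underlying morphism. -/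
noncomputable def karoubiHomF (P Q : Karoubi C) : (P ⟶ Q) →ₗ[k] (P.X ⟶ Q.X) where
  toFun f := f.f
  map_add' _ _ := rfl
  map_smul' _ _ := rfl

/-- The inverse map `Tr(Kar(C)) → Tr(C)`, sending `[f]` to `[f.f]`. -/
noncomputable def traceInv : Trace k (Karoubi C) →ₗ[k] Trace k C :=
  letI := Classical.decEq C
  letI := Classical.decEq (Karoubi C)
  Submodule.liftQ (traceRel k (Karoubi C))
    (DirectSum.toModule k (Karoubi C) (Trace k C)
      (fun P => (traceRel k C).mkQ ∘ₗ
        (DirectSum.lof k C (fun w : C => w ⟶ w) P.X) ∘ₗ karoubiHomF k P P))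
    (by
      rw [traceRel, Submodule.span_le]
      rintro z ⟨P, Q, f, g, rfl⟩
      simp only [SetLike.mem_coe, LinearMap.mem_ker, map_sub]
      rw [← DirectSum.lof_eq_of k, ← DirectSum.lof_eq_of k,
        DirectSum.toModule_lof, DirectSum.toModule_lof]
      simp only [LinearMap.comp_apply]
      rw [sub_eq_zero]
      simp only [Submodule.mkQ_apply]
      rw [Submodule.Quotient.eq, traceRel]
      refine Submodule.subset_span ⟨P.X, Q.X, f.f, g.f, ?_⟩
      rw [DirectSum.lof_eq_of k, DirectSum.lof_eq_of k]
      rfl)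

theorem traceMap_traceMk {D : Type u'} [Category.{v'} D] [Preadditive D]
    [CategoryTheory.Linear k D] (F : C ⥤ D) [F.Additive] [F.Linear k] {x : C} (f : x ⟶ x) :
    traceMap k F (traceMk k f) = traceMk k (F.map f) := by
  letI := Classical.decEq C
  letI := Classical.decEq D
  rw [traceMap, traceMk, Submodule.liftQ_apply, ← DirectSum.lof_eq_of k,
    DirectSum.toModule_lof]
  simp only [LinearMap.comp_apply, Functor.coe_mapLinearMap, Submodule.mkQ_apply]
  rw [DirectSum.lof_eq_of k]
  rfl

theorem traceInv_traceMk {P : Karoubi C} (f : P ⟶ P) :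
    traceInv k (traceMk k f) = traceMk k f.f := by
  letI := Classical.decEq C
  letI := Classical.decEq (Karoubi C)
  rw [traceInv, traceMk, Submodule.liftQ_apply, ← DirectSum.lof_eq_of k,
    DirectSum.toModule_lof]
  simp only [LinearMap.comp_apply, Submodule.mkQ_apply]
  rw [DirectSum.lof_eq_of k]
  rfl

/-- In `Tr(Kar C)`, the class of `f : P ⟶ P` equals the class of `ι(f.f)`. -/
theorem traceMk_eq_traceMk_toKaroubi {P : Karoubi C} (f : P ⟶ P) :
    traceMk k f = traceMk k ((toKaroubi C).map f.f) := by
  letI := Classical.decEq (Karoubi C)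
  rw [traceMk, traceMk, Submodule.Quotient.eq, traceRel]
  refine Submodule.subset_span
    ⟨P, (toKaroubi C).obj P.X,
      ⟨f.f, by simp⟩, ⟨P.p, by simp⟩, ?_⟩
  congr 1
  · congr 1
    apply Karoubi.hom_ext
    simp [Karoubi.comp_f]
  · congr 1
    apply Karoubi.hom_ext
    simp [Karoubi.comp_f, toKaroubi]

end TraceInverse

open CategoryTheory.Idempotents

/-- The canonical fully faithful `k`-linear functor `ι : C → Kar(C)` into
the Karoubi envelope induces an isomorphism of `k`-vector spaces `Tr(C) ≅ Tr(Kar(C))`. -/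
theorem trace_toKaroubi_bijective
    (C : Type u) [Category.{v} C] [Preadditive C] [CategoryTheory.Linear k C] :
    Function.Bijective (traceMap k (toKaroubi C)) := by
  letI := Classical.decEq C
  letI := Classical.decEq (Karoubi C)
  refine Function.bijective_iff_has_inverse.mpr ⟨traceInv k, ?_, ?_⟩
  · intro z
    obtain ⟨w, rfl⟩ := Submodule.Quotient.mk_surjective _ z
    induction w using DirectSum.induction_on with
    | zero => rw [Submodule.Quotient.mk_zero, map_zero, map_zero]
    | of x f =>
      show traceInv k (traceMap k (toKaroubi C) (traceMk k f)) = traceMk k f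
      rw [traceMap_traceMk, traceInv_traceMk]
      rfl
    | add x y hx hy =>
      rw [Submodule.Quotient.mk_add, map_add, map_add, hx, hy]
  · intro z
    obtain ⟨w, rfl⟩ := Submodule.Quotient.mk_surjective _ z
    induction w using DirectSum.induction_on with
    | zero => rw [Submodule.Quotient.mk_zero, map_zero, map_zero]
    | of P f =>
      show traceMap k (toKaroubi C) (traceInv k (traceMk k f)) = traceMk k f
      rw [traceInv_traceMk, traceMap_traceMk, ← traceMk_eq_traceMk_toKaroubi]
    | add x y hx hy =>
      rw [Submodule.Quotient.mk_add, map_add, map_add, hx, hy]
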